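/- Let G be a finite group, k a positive integer, and n a positive integer coprime to the order of G. Let X be the set of all γ_k-values in G and Y the set of all n-th powers of γ_k-values. Then X = Y. -/

import Mathlib

open scoped commutatorElement

/-- `lcomm x n` is the left-normed commutator `[x 0, x 1, ..., x n]`. -/
def lcomm {G : Type*} [Group G] (x : ℕ → G) : ℕ → G
  | 0 => x 0
  | n + 1 => ⁅lcomm x n, x (n + 1)⁆

/-- `g` is a `γ_k`-value: a left-normed commutator of `k` elements of `G`. -/
def IsGammaVal {G : Type*} [Group G] (k : ℕ) (g : G) : Prop :=
  ∃ y : ℕ → G, g = lcomm y (k - 1)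

namespace GammaAux

open Finset MonoidAlgebra

/-! ### A generic orbit-counting lemma for sums over a `p`-periodic map -/

lemma orbit_sum {α : Type*} [DecidableEq α] {M : Type*} [AddCommMonoid M] {p : ℕ}
    (hp : p.Prime) (ρ : α → α) (hiter : ∀ a, ρ^[p] a = a) (ψ : α → M)
    (hinv : ∀ a, ψ (ρ a) = ψ a) (hM : ∀ m : M, p • m = 0) :
    ∀ t : Finset α, (∀ a, a ∈ t ↔ ρ a ∈ t) → (∀ a ∈ t, ρ a ≠ a) →
      ∑ a ∈ t, ψ a = 0 := by
  have hppos : 0 < p := hp.pos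
  have hfixmul : ∀ (q : ℕ) (a : α), (ρ^[p])^[q] a = a := by
    intro q
    induction q with
    | zero => intro a; rfl
    | succ q ih => intro a; rw [Function.iterate_succ_apply, hiter, ih]
  have hiterp : ∀ (q : ℕ) (a : α), ρ^[p * q] a = a := by
    intro q a; rw [Function.iterate_mul]; exact hfixmul q a
  have htrans : ∀ b : α, ρ b = b → ∀ k, ρ^[k] b = b := by
    intro b hb k
    induction k with
    | zero => rfl
    | succ k ih => rw [Function.iterate_succ_apply, hb, ih]
  -- if some iterate of period d (0 < d < p) fixes a point, then ρ fixes it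
  have hper : ∀ (d : ℕ) (a : α), 0 < d → d < p → ρ^[d] a = a → ρ a = a := by
    intro d a hd0 hdp hda
    have hcop : Nat.Coprime d p :=
      ((hp.coprime_iff_not_dvd).mpr (Nat.not_dvd_of_pos_of_lt hd0 hdp)).symm
    obtain ⟨e, -, he⟩ := Nat.exists_mul_mod_eq_one_of_coprime hcop hp.one_lt
    have h1 : d * e = p * (d * e / p) + 1 := by
      conv_lhs => rw [← Nat.div_add_mod (d * e) p, he]
    have h2 : ρ^[d * e] a = a := by
      rw [Function.iterate_mul]
      have : ∀ k, (ρ^[d])^[k] a = a := by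
        intro k
        induction k with
        | zero => rfl
        | succ k ih => rw [Function.iterate_succ_apply, hda, ih]
      exact this e
    rw [h1, Function.iterate_add_apply, hiterp] at h2
    simpa using h2
  intro t
  induction t using Finset.strongInduction with
  | _ t ih =>
    intro hstab hnf
    rcases t.eq_empty_or_nonempty with rfl | ⟨a, ha⟩
    · simp
    · classical
      set O : Finset α := (Finset.univ : Finset (Fin p)).image (fun k => ρ^[k.val] a) with hO
      have hmemO : ∀ k : ℕ, ρ^[k] a ∈ O := by
        intro k
        have hsplit : ρ^[k] a = ρ^[k % p] a := by
          conv_lhs => rw [← Nat.div_add_mod k p, Function.iterate_add_apply, hiterp]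
        rw [hsplit, hO]
        exact Finset.mem_image.mpr ⟨⟨k % p, Nat.mod_lt _ hppos⟩, Finset.mem_univ _, rfl⟩
      have hOmem : ∀ b ∈ O, ∃ k : ℕ, ρ^[k] a = b := by
        intro b hb
        obtain ⟨k, _, hk⟩ := Finset.mem_image.mp hb
        exact ⟨k.val, hk⟩
      have hitert : ∀ k : ℕ, ρ^[k] a ∈ t := by
        intro k
        induction k with
        | zero => exact ha
        | succ k ih2 => rw [Function.iterate_succ_apply']; exact (hstab _).mp ih2
      have hOt : O ⊆ t := by
        intro b hb; obtain ⟨k, hk⟩ := hOmem b hb; exact hk ▸ hitert k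
      have hconst' : ∀ k : ℕ, ψ (ρ^[k] a) = ψ a := by
        intro k
        induction k with
        | zero => rfl
        | succ k ih2 => rw [Function.iterate_succ_apply', hinv]; exact ih2
      have hconst : ∀ b ∈ O, ψ b = ψ a := by
        intro b hb
        obtain ⟨k, hk⟩ := hOmem b hb
        rw [← hk]
        exact hconst' k
      have hnfa : ρ a ≠ a := hnf a ha
      have haux : ∀ i j : ℕ, i < j → j < p → ρ^[i] a = ρ^[j] a → False := by
        intro i j hij hjp hkl
        have h3 : ρ^[j - i] (ρ^[i] a) = ρ^[i] a := by
          rw [← Function.iterate_add_apply, Nat.sub_add_cancel (Nat.le_of_lt hij)]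
          exact hkl.symm
        have h4 : ρ (ρ^[i] a) = ρ^[i] a :=
          hper _ _ (Nat.sub_pos_of_lt hij) (lt_of_le_of_lt (Nat.sub_le _ _) hjp) h3
        have h5 : ρ^[p - i] (ρ^[i] a) = a := by
          rw [← Function.iterate_add_apply,
            Nat.sub_add_cancel (Nat.le_of_lt (lt_trans hij hjp)), hiter]
        have h6 : ρ a = a := by
          have h7 := htrans _ h4 (p - i)
          rw [h5] at h7
          rw [h7]
          exact h4
        exact hnfa h6
      have hinj : Function.Injective (fun k : Fin p => ρ^[k.val] a) := by
        intro k l hkl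
        simp only at hkl
        rcases lt_trichotomy k.val l.val with h | h | h
        · exact (haux k.val l.val h l.isLt hkl).elim
        · exact Fin.ext h
        · exact (haux l.val k.val h k.isLt hkl.symm).elim
      have hcardO : O.card = p := by
        rw [hO, Finset.card_image_of_injective _ hinj, Finset.card_univ, Fintype.card_fin]
      have hOstab : ∀ b, b ∈ O ↔ ρ b ∈ O := by
        intro b
        constructor
        · intro hb
          obtain ⟨k, hk⟩ := hOmem b hb
          rw [← hk, show ρ (ρ^[k] a) = ρ^[k + 1] a from (Function.iterate_succ_apply' ρ k a).symm]
          exact hmemO _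
        · intro hb
          obtain ⟨k, hk⟩ := hOmem _ hb
          have hb2 : ρ^[p - 1] (ρ b) = b := by
            have hps : (p - 1).succ = p := by omega
            rw [← Function.iterate_succ_apply, hps, hiter]
          rw [← hb2, ← hk, ← Function.iterate_add_apply]
          exact hmemO _
      have hOsum : ∑ b ∈ O, ψ b = 0 := by
        rw [Finset.sum_congr rfl hconst, Finset.sum_const, hcardO]
        exact hM _
      have hss : t \ O ⊂ t := by
        apply Finset.sdiff_ssubset hOt
        exact ⟨a, by simpa using hmemO 0⟩
      have hrec : ∑ b ∈ t \ O, ψ b = 0 := by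
        apply ih _ hss
        · intro b
          simp only [Finset.mem_sdiff]
          rw [← hstab b, ← hOstab b]
        · intro b hb
          exact hnf b (Finset.mem_sdiff.mp hb).1
      calc ∑ b ∈ t, ψ b = ∑ b ∈ t \ O, ψ b + ∑ b ∈ O, ψ b := (Finset.sum_sdiff hOt).symm
      _ = 0 := by rw [hOsum, hrec, add_zero]

section Core

variable {G : Type*} [Group G] [Fintype G] [DecidableEq G]

/-- The conjugacy class of `a` as a `Finset`. -/
def cls (a : G) : Finset G := Finset.univ.image fun c => c * a * c⁻¹

lemma mem_cls {a b : G} : b ∈ cls a ↔ ∃ c, c * a * c⁻¹ = b := by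
  simp [cls]

lemma self_mem_cls {a : G} : a ∈ cls a := mem_cls.mpr ⟨1, by group⟩

lemma conj_mem_cls {a b : G} (h : b ∈ cls a) (c : G) : c * b * c⁻¹ ∈ cls a := by
  obtain ⟨d, rfl⟩ := mem_cls.mp h
  exact mem_cls.mpr ⟨c * d, by group⟩

variable (p : ℕ) [Fact p.Prime]

/-- The class sum in the group algebra over `ZMod p`. -/
noncomputable def zc (a : G) : MonoidAlgebra (ZMod p) G := ∑ b ∈ cls a, MonoidAlgebra.single b 1

/-- Summing the coefficients over a subset `S`, as an additive hom. -/
noncomputable def lam (S : Finset G) : MonoidAlgebra (ZMod p) G →+ ZMod p where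
  toFun f := ∑ g ∈ S, f.coeff g
  map_zero' := by simp
  map_add' f g := by
    have h : ∀ x : G, (f + g).coeff x = f.coeff x + g.coeff x := fun x => Finsupp.add_apply f.coeff g.coeff x
    simp only [h, Finset.sum_add_distrib]

lemma lam_apply (S : Finset G) (f : MonoidAlgebra (ZMod p) G) :
    lam p S f = ∑ g ∈ S, f.coeff g := rfl

lemma lam_single (S : Finset G) (a : G) (r : ZMod p) :
    lam p S (MonoidAlgebra.single a r) = if a ∈ S then r else 0 := by
  rw [lam_apply]
  simp [Finsupp.single_apply, Finset.sum_ite_eq]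

lemma lam_smul (S : Finset G) (r : ZMod p) (f : MonoidAlgebra (ZMod p) G) :
    lam p S (r • f) = r * lam p S f := by
  rw [lam_apply, lam_apply, Finset.mul_sum]
  exact Finset.sum_congr rfl fun g _ => by rw [MonoidAlgebra.coeff_smul_apply, smul_eq_mul]

lemma lam_mul_comm (S : Finset G) (hS : ∀ u v : G, u * v ∈ S ↔ v * u ∈ S)
    (f g : MonoidAlgebra (ZMod p) G) : lam p S (f * g) = lam p S (g * f) := by
  induction f using MonoidAlgebra.induction_on with
  | of a =>
    induction g using MonoidAlgebra.induction_on with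
    | of b =>
      rw [MonoidAlgebra.of_apply, MonoidAlgebra.of_apply, MonoidAlgebra.single_mul_single,
        MonoidAlgebra.single_mul_single, lam_single, lam_single, one_mul]
      exact if_congr (hS a b) rfl rfl
    | add g₁ g₂ h₁ h₂ => rw [mul_add, add_mul, map_add, map_add, h₁, h₂]
    | smul r g h => rw [mul_smul_comm, smul_mul_assoc, lam_smul, lam_smul, h]
  | add f₁ f₂ h₁ h₂ => rw [add_mul, mul_add, map_add, map_add, h₁, h₂]
  | smul r f h => rw [smul_mul_assoc, mul_smul_comm, lam_smul, lam_smul, h]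

lemma zc_commute (a : G) (r : MonoidAlgebra (ZMod p) G) : Commute (zc p a) r := by
  induction r using MonoidAlgebra.induction_on with
  | of g =>
    show zc p a * of (ZMod p) G g = of (ZMod p) G g * zc p a
    rw [MonoidAlgebra.of_apply, zc, Finset.sum_mul, Finset.mul_sum]
    simp_rw [MonoidAlgebra.single_mul_single, one_mul]
    apply Finset.sum_nbij' (fun b => g⁻¹ * b * g) (fun b => g * b * g⁻¹)
    · intro b hb
      have := conj_mem_cls hb g⁻¹
      simpa using this
    · intro b hb
      exact conj_mem_cls hb g
    · intro b _; group
    · intro b _; group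
    · intro b _
      congr 1
      group
  | add f₁ f₂ h₁ h₂ => exact h₁.add_right h₂
  | smul r f h => exact h.smul_right r

/-- number of ways to write `g` as a product of an element of `cls a` and one of `cls b` -/
def Ncnt (a b g : G) : ℕ := ((cls a ×ˢ cls b).filter fun q => q.1 * q.2 = g).card

lemma zc_mul_apply (a b g : G) :
    (zc p a * zc p b).coeff g = (Ncnt a b g : ZMod p) := by
  have h1 : zc p a * zc p b = ∑ q ∈ cls a ×ˢ cls b, MonoidAlgebra.single (q.1 * q.2) (1 : ZMod p) := by
    rw [Finset.sum_product, zc, zc, Finset.sum_mul]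
    refine Finset.sum_congr rfl fun u _ => ?_
    rw [Finset.mul_sum]
    exact Finset.sum_congr rfl fun v _ => by rw [MonoidAlgebra.single_mul_single, one_mul]
  have h2 : (∑ q ∈ cls a ×ˢ cls b, MonoidAlgebra.single (q.1 * q.2) (1 : ZMod p)).coeff g
      = ∑ q ∈ cls a ×ˢ cls b, (MonoidAlgebra.single (q.1 * q.2) (1 : ZMod p)).coeff g := by
    rw [MonoidAlgebra.coeff_sum, Finset.sum_apply']
  have h3 : ∀ q ∈ cls a ×ˢ cls b, (MonoidAlgebra.single (q.1 * q.2) (1 : ZMod p)).coeff g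
      = if q.1 * q.2 = g then 1 else 0 := fun q _ => by rw [MonoidAlgebra.coeff_single, Finsupp.single_apply]
  rw [h1, h2, Finset.sum_congr rfl h3, Finset.sum_boole]
  rfl

lemma Ncnt_conj (a b g c : G) : Ncnt a b (c * g * c⁻¹) = Ncnt a b g := by
  unfold Ncnt
  apply Finset.card_nbij' (fun q => (c⁻¹ * q.1 * c, c⁻¹ * q.2 * c))
    (fun q => (c * q.1 * c⁻¹, c * q.2 * c⁻¹))
  · intro q hq
    rw [Finset.mem_coe, Finset.mem_filter, Finset.mem_product] at hq ⊢
    obtain ⟨⟨h1, h2⟩, h3⟩ := hq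
    refine ⟨⟨by simpa using conj_mem_cls h1 c⁻¹, by simpa using conj_mem_cls h2 c⁻¹⟩, ?_⟩
    simp only
    rw [show c⁻¹ * q.1 * c * (c⁻¹ * q.2 * c) = c⁻¹ * (q.1 * q.2) * c by group, h3]
    group
  · intro q hq
    rw [Finset.mem_coe, Finset.mem_filter, Finset.mem_product] at hq ⊢
    obtain ⟨⟨h1, h2⟩, h3⟩ := hq
    refine ⟨⟨conj_mem_cls h1 c, conj_mem_cls h2 c⟩, ?_⟩
    simp only
    rw [show c * q.1 * c⁻¹ * (c * q.2 * c⁻¹) = c * (q.1 * q.2) * c⁻¹ by group, h3]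
  · intro q _; simp only; ext <;> simp <;> group
  · intro q _; simp only; ext <;> simp <;> group

lemma Ncnt_le (a b g : G) : Ncnt a b g ≤ Fintype.card G ^ 2 := by
  unfold Ncnt
  calc ((cls a ×ˢ cls b).filter fun q => q.1 * q.2 = g).card
      ≤ (cls a ×ˢ cls b).card := Finset.card_filter_le _ _
    _ = (cls a).card * (cls b).card := Finset.card_product _ _
    _ ≤ Fintype.card G * Fintype.card G :=
        Nat.mul_le_mul (Finset.card_le_univ _) (Finset.card_le_univ _)
    _ = Fintype.card G ^ 2 := (sq (Fintype.card G)).symm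

/-! ### The noncommutative freshman's dream via necklace counting -/

/-- product of a word -/
noncomputable def wprod (v : G → MonoidAlgebra (ZMod p) G) {m : ℕ} (f : Fin m → G) :
    MonoidAlgebra (ZMod p) G :=
  (List.ofFn fun j => v (f j)).prod

lemma wprod_cons (v : G → MonoidAlgebra (ZMod p) G) {m : ℕ} (i : G) (f : Fin m → G) :
    wprod p v (Fin.cons i f) = v i * wprod p v f := by
  unfold wprod
  rw [List.ofFn_succ, List.prod_cons, Fin.cons_zero]
  congr 1

lemma expand (v : G → MonoidAlgebra (ZMod p) G) (s : Finset G) (m : ℕ) :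
    (∑ i ∈ s, v i) ^ m = ∑ f ∈ Fintype.piFinset (fun _ : Fin m => s), wprod p v f := by
  induction m with
  | zero =>
    rw [pow_zero]
    have h1 : ∀ f ∈ Fintype.piFinset (fun _ : Fin 0 => s), wprod p v f = 1 := by
      intro f _
      unfold wprod
      rw [List.ofFn_zero, List.prod_nil]
    rw [Finset.sum_congr rfl h1, Finset.sum_const, Fintype.card_piFinset]
    simp
  | succ m ih =>
    rw [pow_succ', ih, Finset.mul_sum]
    simp_rw [Finset.sum_mul]
    rw [Finset.sum_comm]
    -- now : ∑ i ∈ s, ∑ f ∈ P_m, v i * wprod f = ∑ F ∈ P_(m+1), wprod F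
    rw [← Finset.sum_product']
    apply Finset.sum_nbij' (fun q => Fin.cons (α := fun _ => G) q.1 q.2) (fun F => (F 0, fun j => F j.succ))
    · intro q hq
      rw [Finset.mem_product] at hq
      rw [Fintype.mem_piFinset]
      intro j
      rcases Fin.eq_zero_or_eq_succ j with rfl | ⟨j', rfl⟩
      · rw [Fin.cons_zero]; exact hq.1
      · rw [Fin.cons_succ]; exact Fintype.mem_piFinset.mp hq.2 j'
    · intro F hF
      rw [Finset.mem_product]
      exact ⟨Fintype.mem_piFinset.mp hF 0, Fintype.mem_piFinset.mpr
        fun j => Fintype.mem_piFinset.mp hF j.succ⟩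
    · intro q _
      simp [Fin.cons_zero, Fin.cons_succ]
    · intro F _
      exact Fin.cons_self_tail F
    · intro q _
      exact (wprod_cons p v q.1 q.2).symm

variable [NeZero p]

lemma ofFn_rot {β : Type*} (w : Fin p → β) :
    (List.ofFn fun j : Fin p => w (j + 1)) = (List.ofFn w).rotate 1 := by
  have hp : p.Prime := Fact.out
  apply List.ext_getElem
  · simp
  · intro i h1 h2
    rw [List.getElem_ofFn, List.getElem_rotate, List.getElem_ofFn]
    congr 1
    apply Fin.ext
    simp [Fin.val_add, Fin.val_one', Nat.mod_eq_of_lt hp.one_lt]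

lemma lam_rotate (S : Finset G) (hS : ∀ u v : G, u * v ∈ S ↔ v * u ∈ S)
    (c : MonoidAlgebra (ZMod p) G) (hc : ∀ r, Commute c r)
    (l : List (MonoidAlgebra (ZMod p) G)) :
    lam p S (c * (l.rotate 1).prod) = lam p S (c * l.prod) := by
  cases l with
  | nil => simp
  | cons a t =>
    rw [show (a :: t).rotate 1 = t ++ [a] by rw [List.rotate_cons_succ, List.rotate_zero]]
    simp only [List.prod_append, List.prod_cons, List.prod_nil, mul_one]
    rw [← mul_assoc c, lam_mul_comm p S hS (c * t.prod) a, ← mul_assoc, ← (hc a).eq, mul_assoc]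

open Fin.NatCast Fin.CommRing in
lemma fresh (S : Finset G) (hS : ∀ u v : G, u * v ∈ S ↔ v * u ∈ S)
    (c : MonoidAlgebra (ZMod p) G) (hc : ∀ r, Commute c r)
    (s : Finset G) (v : G → MonoidAlgebra (ZMod p) G) :
    lam p S (c * (∑ i ∈ s, v i) ^ p) = ∑ i ∈ s, lam p S (c * v i ^ p) := by
  classical
  have hp : p.Prime := Fact.out
  rw [expand, Finset.mul_sum, map_sum]
  set P := Fintype.piFinset (fun _ : Fin p => s) with hP
  set φ : (Fin p → G) → ZMod p := fun f => lam p S (c * wprod p v f) with hφ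
  set ρ : (Fin p → G) → (Fin p → G) := fun f j => f (j + 1) with hρ
  have hρiter : ∀ (k : ℕ) (f : Fin p → G), ρ^[k] f = fun j => f (j + (k : Fin p)) := by
    intro k
    induction k with
    | zero => intro f; simp
    | succ k ih =>
      intro f
      rw [Function.iterate_succ_apply, ih]
      funext j
      rw [hρ]
      simp only
      congr 1
      push_cast
      ring
  have hρp : ∀ f, ρ^[p] f = f := by
    intro f
    rw [hρiter]
    funext j
    rw [Fin.natCast_self, add_zero]
  have hρinj : Function.Injective ρ := by
    intro f g h
    have h2 := congrArg (ρ^[p - 1]) h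
    have hps : (p - 1).succ = p := by have := hp.pos; omega
    rwa [← Function.iterate_succ_apply, ← Function.iterate_succ_apply, hps, hρp, hρp] at h2
  have hφinv : ∀ f, φ (ρ f) = φ f := by
    intro f
    rw [hφ]
    simp only
    have h9 : wprod p v (ρ f) = ((List.ofFn fun j => v (f j)).rotate 1).prod := by
      unfold wprod
      rw [← ofFn_rot p (fun j => v (f j))]
    rw [h9, lam_rotate p S hS c hc]
    rfl
  have hPstab : ∀ f, f ∈ P ↔ ρ f ∈ P := by
    intro f
    rw [hP, Fintype.mem_piFinset, Fintype.mem_piFinset]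
    constructor
    · intro h j; exact h _
    · intro h j
      have h2 : f (j - 1 + 1) ∈ s := h (j - 1)
      have h3 : j - 1 + 1 = j := by ring
      rwa [h3] at h2
  have hsplit := Finset.sum_filter_add_sum_filter_not P (fun f => ρ f = f) φ
  rw [← hsplit]
  have hzero : ∑ f ∈ P.filter (fun f => ¬ ρ f = f), φ f = 0 := by
    apply orbit_sum hp ρ hρp φ hφinv
    · intro m
      rw [nsmul_eq_mul, ZMod.natCast_self, zero_mul]
    · intro f
      simp only [Finset.mem_filter]
      constructor
      · rintro ⟨h1, h2⟩
        refine ⟨(hPstab f).mp h1, fun h3 => h2 (hρinj h3)⟩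
      · rintro ⟨h1, h2⟩
        refine ⟨(hPstab f).mpr h1, fun h3 => h2 (by rw [h3]; exact h3)⟩
    · intro f hf
      exact (Finset.mem_filter.mp hf).2
  rw [hzero, add_zero]
  -- fixed points are the constant words
  apply Finset.sum_nbij' (fun f => f 0) (fun i _ => i)
  · intro f hf
    rw [Finset.mem_filter] at hf
    exact Fintype.mem_piFinset.mp hf.1 0
  · intro i hi
    rw [Finset.mem_filter]
    constructor
    · rw [Fintype.mem_piFinset]; intro _; exact hi
    · funext j; rfl
  · intro f hf
    rw [Finset.mem_filter] at hf
    have hfix : ∀ j, f (j + 1) = f j := fun j => congrFun hf.2 j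
    have hcast : ∀ k : ℕ, f ((k : ℕ) : Fin p) = f ((0 : ℕ) : Fin p) := by
      intro k
      induction k with
      | zero => rfl
      | succ k ih =>
        rw [show (((k + 1 : ℕ)) : Fin p) = ((k : ℕ) : Fin p) + 1 by push_cast; ring, hfix, ih]
    funext j
    have h5 := hcast j.val
    rw [Fin.cast_val_eq_self, Nat.cast_zero] at h5
    exact h5.symm
  · intro i _; rfl
  · intro f hf
    rw [Finset.mem_filter] at hf
    have hfix : ∀ j, f (j + 1) = f j := fun j => congrFun hf.2 j
    have hconstf : f = fun _ => f 0 := by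
      have hcast : ∀ k : ℕ, f ((k : ℕ) : Fin p) = f ((0 : ℕ) : Fin p) := by
        intro k
        induction k with
        | zero => rfl
        | succ k ih =>
          rw [show (((k + 1 : ℕ)) : Fin p) = ((k : ℕ) : Fin p) + 1 by push_cast; ring, hfix, ih]
      funext j
      have := hcast j.val
      rwa [Fin.cast_val_eq_self, Nat.cast_zero] at this
    rw [hφ]
    simp only
    congr 2
    rw [hconstf]
    unfold wprod
    rw [List.ofFn_const, List.prod_replicate]

end Core

section Key

variable {G : Type*} [Group G] [Fintype G] [DecidableEq G]

lemma exists_pow_inv {p : ℕ} (h : p.Coprime (Nat.card G)) :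
    ∃ m, ∀ a : G, (a ^ p) ^ m = a := by
  have hpos : 0 < Nat.card G := Nat.card_pos
  have htot : 0 < (Nat.card G).totient := Nat.totient_pos.mpr hpos
  refine ⟨p ^ ((Nat.card G).totient - 1), fun a => ?_⟩
  rw [← pow_mul]
  have hexp : p * p ^ ((Nat.card G).totient - 1) = p ^ (Nat.card G).totient := by
    have hps : (Nat.card G).totient - 1 + 1 = (Nat.card G).totient := by omega
    rw [← pow_succ', hps]
  rw [hexp]
  have h2 : a ^ (p ^ (Nat.card G).totient) = a ^ 1 := by
    apply pow_eq_pow_iff_modEq.mpr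
    exact (Nat.ModEq.pow_totient h).of_dvd (orderOf_dvd_natCard a)
  rw [h2, pow_one]

variable (p : ℕ) [Fact p.Prime]

lemma pow_p_injective (hm : ∃ m, ∀ a : G, (a ^ p) ^ m = a) :
    Function.Injective (fun a : G => a ^ p) := by
  obtain ⟨m, hm⟩ := hm
  intro a b hab
  simp only at hab
  rw [← hm a, ← hm b, hab]

lemma cls_pow_image (hm : ∃ m, ∀ a : G, (a ^ p) ^ m = a) (w : G) :
    (cls w).image (fun a => a ^ p) = cls (w ^ p) := by
  ext b
  simp only [Finset.mem_image]
  constructor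
  · rintro ⟨a, ha, rfl⟩
    obtain ⟨c, rfl⟩ := mem_cls.mp ha
    exact mem_cls.mpr ⟨c, (conj_pow).symm⟩
  · intro hb
    obtain ⟨c, rfl⟩ := mem_cls.mp hb
    exact ⟨c * w * c⁻¹, mem_cls.mpr ⟨c, rfl⟩, conj_pow⟩

lemma filter_pow_cls (hm : ∃ m, ∀ a : G, (a ^ p) ^ m = a) (x : G) :
    Finset.univ.filter (fun g : G => g ^ p ∈ cls (x ^ p)) = cls x := by
  ext g
  simp only [Finset.mem_filter, Finset.mem_univ, true_and]
  constructor
  · intro hg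
    obtain ⟨c, hc⟩ := mem_cls.mp hg
    have h2 : (c * x * c⁻¹) ^ p = g ^ p := by rw [conj_pow]; exact hc
    exact mem_cls.mpr ⟨c, pow_p_injective p hm h2⟩
  · intro hg
    obtain ⟨c, rfl⟩ := mem_cls.mp hg
    exact mem_cls.mpr ⟨c, (conj_pow).symm⟩

lemma card_cls_pow (hm : ∃ m, ∀ a : G, (a ^ p) ^ m = a) (x : G) :
    (cls (x ^ p)).card = (cls x).card := by
  rw [← cls_pow_image p hm, Finset.card_image_of_injective _ (pow_p_injective p hm)]

lemma zc_pow_sum (hm : ∃ m, ∀ a : G, (a ^ p) ^ m = a) (w : G) :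
    ∑ a ∈ cls w, MonoidAlgebra.single (a ^ p) (1 : ZMod p) = zc p (w ^ p) := by
  rw [zc, ← cls_pow_image p hm w, Finset.sum_image]
  intro a _ b _ hab
  exact pow_p_injective p hm hab

lemma sum_single_univ (f : MonoidAlgebra (ZMod p) G) :
    ∑ g ∈ Finset.univ, MonoidAlgebra.single g (f.coeff g) = f := by
  ext h
  rw [MonoidAlgebra.coeff_sum, Finset.sum_apply']
  simp [Finsupp.single_apply, Finset.sum_ite_eq]

omit [Fact p.Prime] in
theorem key (hp : p.Prime) (hbig : Fintype.card G ^ 2 < p) (y t x : G)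
    (hx : x = ⁅y, t⁆) : ∃ d s : G, x ^ p = ⁅d * y ^ p * d⁻¹, s⁆ := by
  haveI : Fact p.Prime := ⟨hp⟩
  haveI : NeZero p := ⟨hp.ne_zero⟩
  have hcard0 : 0 < Fintype.card G := Fintype.card_pos
  have hcardlt : Fintype.card G < p :=
    lt_of_le_of_lt (Nat.le_self_pow two_ne_zero _) hbig
  have hpcop : p.Coprime (Nat.card G) := by
    rw [Nat.card_eq_fintype_card]
    exact (hp.coprime_iff_not_dvd).mpr fun hd =>
      absurd (Nat.le_of_dvd hcard0 hd) (not_le.mpr hcardlt)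
  have hm : ∃ m, ∀ a : G, (a ^ p) ^ m = a := exists_pow_inv hpcop
  set S : Finset G := cls (x ^ p) with hSdef
  have hS : ∀ u v : G, u * v ∈ S ↔ v * u ∈ S := by
    intro u v
    constructor
    · intro h
      have h2 := conj_mem_cls h u⁻¹
      rwa [show u⁻¹ * (u * v) * u⁻¹⁻¹ = v * u by group] at h2
    · intro h
      have h2 := conj_mem_cls h v⁻¹
      rwa [show v⁻¹ * (v * u) * v⁻¹⁻¹ = u * v by group] at h2
  have hcomm : ∀ (a : G) (r : MonoidAlgebra (ZMod p) G), Commute (zc p a) r := zc_commute p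
  -- positivity of the count
  have hN1pos : 0 < Ncnt y y⁻¹ x := by
    apply Finset.card_pos.mpr
    refine ⟨(y, t * y⁻¹ * t⁻¹), ?_⟩
    rw [Finset.mem_filter, Finset.mem_product]
    refine ⟨⟨self_mem_cls, conj_mem_cls self_mem_cls t⟩, ?_⟩
    simp only
    rw [hx, commutatorElement_def]
    group
  -- Path A
  have pathA : lam p S ((zc p y * zc p y⁻¹) ^ p)
      = ((cls x).card : ZMod p) * ((Ncnt y y⁻¹ x : ℕ) : ZMod p) := by
    conv_lhs => rw [← sum_single_univ p (zc p y * zc p y⁻¹),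
      ← one_mul ((∑ g ∈ Finset.univ, MonoidAlgebra.single g ((zc p y * zc p y⁻¹).coeff g)) ^ p)]
    rw [fresh p S hS 1 (fun r => Commute.one_left r) Finset.univ
      (fun g => MonoidAlgebra.single g ((zc p y * zc p y⁻¹).coeff g))]
    simp_rw [one_mul, MonoidAlgebra.single_pow, lam_single]
    rw [← Finset.sum_filter, filter_pow_cls p hm x]
    have hval : ∀ g ∈ cls x, ((zc p y * zc p y⁻¹).coeff g) ^ p = ((Ncnt y y⁻¹ x : ℕ) : ZMod p) := by
      intro g hg
      obtain ⟨c, rfl⟩ := mem_cls.mp hg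
      rw [ZMod.pow_card, zc_mul_apply, Ncnt_conj]
    rw [Finset.sum_congr rfl hval, Finset.sum_const, nsmul_eq_mul]
  -- Path B
  have pathB : lam p S ((zc p y * zc p y⁻¹) ^ p)
      = ((cls x).card : ZMod p) * ((Ncnt (y ^ p) ((y ^ p)⁻¹) (x ^ p) : ℕ) : ZMod p) := by
    rw [(hcomm y (zc p y⁻¹)).mul_pow]
    have e1 : lam p S (zc p y ^ p * zc p y⁻¹ ^ p)
        = lam p S (zc p y ^ p * zc p ((y ^ p)⁻¹)) := by
      conv_lhs => rw [show zc p y⁻¹ = ∑ a ∈ cls y⁻¹, MonoidAlgebra.single a (1 : ZMod p) from rfl]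
      rw [fresh p S hS (zc p y ^ p) (fun r => (hcomm y r).pow_left p) (cls y⁻¹)
        (fun a => MonoidAlgebra.single a (1 : ZMod p))]
      simp_rw [MonoidAlgebra.single_pow, one_pow]
      rw [← map_sum, ← Finset.mul_sum, zc_pow_sum p hm y⁻¹, inv_pow]
    have e2 : lam p S (zc p y ^ p * zc p ((y ^ p)⁻¹))
        = lam p S (zc p ((y ^ p)⁻¹) * zc p (y ^ p)) := by
      rw [lam_mul_comm p S hS]
      conv_lhs => rw [show zc p y = ∑ a ∈ cls y, MonoidAlgebra.single a (1 : ZMod p) from rfl]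
      rw [fresh p S hS (zc p ((y ^ p)⁻¹)) (fun r => hcomm _ r) (cls y)
        (fun a => MonoidAlgebra.single a (1 : ZMod p))]
      simp_rw [MonoidAlgebra.single_pow, one_pow]
      rw [← map_sum, ← Finset.mul_sum, zc_pow_sum p hm y]
    rw [e1, e2, lam_mul_comm p S hS]
    rw [lam_apply]
    have hval : ∀ g ∈ S, (zc p (y ^ p) * zc p ((y ^ p)⁻¹)).coeff g
        = ((Ncnt (y ^ p) ((y ^ p)⁻¹) (x ^ p) : ℕ) : ZMod p) := by
      intro g hg
      obtain ⟨c, rfl⟩ := mem_cls.mp hg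
      rw [zc_mul_apply, Ncnt_conj]
    rw [Finset.sum_congr rfl hval, Finset.sum_const, nsmul_eq_mul, hSdef,
      card_cls_pow p hm x]
  -- compare
  have hclsne : (((cls x).card : ℕ) : ZMod p) ≠ 0 := by
    rw [Ne, ZMod.natCast_eq_zero_iff]
    intro hdvd
    have h1 : (cls x).card ≤ Fintype.card G := Finset.card_le_univ _
    have h2 : 0 < (cls x).card := Finset.card_pos.mpr ⟨x, self_mem_cls⟩
    exact absurd (Nat.le_of_dvd h2 hdvd) (not_le.mpr (lt_of_le_of_lt h1 hcardlt))
  have hNN : ((Ncnt y y⁻¹ x : ℕ) : ZMod p) = ((Ncnt (y ^ p) ((y ^ p)⁻¹) (x ^ p) : ℕ) : ZMod p) :=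
    mul_left_cancel₀ hclsne (pathA.symm.trans pathB)
  have hNeq : Ncnt y y⁻¹ x = Ncnt (y ^ p) ((y ^ p)⁻¹) (x ^ p) :=
    Nat.ModEq.eq_of_lt_of_lt ((ZMod.natCast_eq_natCast_iff _ _ _).mp hNN)
      (lt_of_le_of_lt (Ncnt_le _ _ _) hbig) (lt_of_le_of_lt (Ncnt_le _ _ _) hbig)
  have hN2pos : 0 < Ncnt (y ^ p) ((y ^ p)⁻¹) (x ^ p) := hNeq ▸ hN1pos
  obtain ⟨q, hq⟩ := Finset.card_pos.mp hN2pos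
  rw [Finset.mem_filter, Finset.mem_product] at hq
  obtain ⟨⟨hq1, hq2⟩, hq3⟩ := hq
  obtain ⟨d, hd⟩ := mem_cls.mp hq1
  obtain ⟨e, he⟩ := mem_cls.mp hq2
  refine ⟨d, e * d⁻¹, ?_⟩
  rw [← hq3, ← hd, ← he, commutatorElement_def]
  group

end Key

/-! ### Gamma values -/

section Gamma

variable {G : Type*} [Group G]

lemma lcomm_succ (y : ℕ → G) (n : ℕ) : lcomm y (n + 1) = ⁅lcomm y n, y (n + 1)⁆ := rfl

lemma lcomm_congr {y z : ℕ → G} : ∀ {m : ℕ}, (∀ i ≤ m, y i = z i) → lcomm y m = lcomm z m := by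
  intro m
  induction m with
  | zero => intro h; exact h 0 (le_refl 0)
  | succ m ih =>
    intro h
    rw [lcomm_succ, lcomm_succ, ih fun i hi => h i (le_trans hi (Nat.le_succ m)),
      h (m + 1) (le_refl _)]

lemma lcomm_conj (y : ℕ → G) (c : G) :
    ∀ m : ℕ, lcomm (fun i => c * y i * c⁻¹) m = c * lcomm y m * c⁻¹ := by
  intro m
  induction m with
  | zero => rfl
  | succ m ih =>
    rw [lcomm_succ, lcomm_succ, ih, commutatorElement_def, commutatorElement_def]
    group

lemma isGammaVal_one (g : G) : IsGammaVal 1 g := ⟨fun _ => g, rfl⟩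

lemma IsGammaVal.conj {k : ℕ} {g : G} (h : IsGammaVal k g) (c : G) :
    IsGammaVal k (c * g * c⁻¹) := by
  obtain ⟨y, rfl⟩ := h
  exact ⟨fun i => c * y i * c⁻¹, (lcomm_conj y c _).symm⟩

lemma isGammaVal_succ_iff {k : ℕ} (hk : 0 < k) (g : G) :
    IsGammaVal (k + 1) g ↔ ∃ h t : G, IsGammaVal k h ∧ g = ⁅h, t⁆ := by
  obtain ⟨j, rfl⟩ : ∃ j, k = j + 1 := ⟨k - 1, (Nat.succ_pred_eq_of_pos hk).symm⟩
  constructor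
  · rintro ⟨y, hy⟩
    refine ⟨lcomm y j, y (j + 1), ⟨y, rfl⟩, ?_⟩
    rw [hy]
    rfl
  · rintro ⟨h, t, ⟨z, hz⟩, rfl⟩
    refine ⟨fun i => if i = j + 1 then t else z i, ?_⟩
    show ⁅h, t⁆ = lcomm _ (j + 1)
    rw [lcomm_succ]
    have h1 : lcomm (fun i => if i = j + 1 then t else z i) j = lcomm z j := by
      apply lcomm_congr
      intro i hi
      rw [if_neg (by omega)]
    rw [h1, if_pos rfl]
    rw [hz]
    rfl

lemma pow_gamma [Finite G] :
    ∀ k : ℕ, 0 < k → ∀ n : ℕ, n.Coprime (Nat.card G) → ∀ g : G,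
      IsGammaVal k g → IsGammaVal k (g ^ n) := by
  intro k
  induction k with
  | zero => intro h; exact absurd h (lt_irrefl 0)
  | succ k ih =>
    intro _ n hcop g hg
    rcases Nat.eq_zero_or_pos k with rfl | hkpos
    · exact isGammaVal_one _
    · cases nonempty_fintype G
      classical
      obtain ⟨h₀, t, hh, rfl⟩ := (isGammaVal_succ_iff hkpos g).mp hg
      haveI : NeZero (Nat.card G) := ⟨Nat.card_pos.ne'⟩
      have hunit : IsUnit ((n : ℕ) : ZMod (Nat.card G)) :=
        (ZMod.isUnit_iff_coprime n (Nat.card G)).mpr hcop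
      obtain ⟨p, hgt, hp, hmod⟩ :=
        Nat.forall_exists_prime_gt_and_eq_mod hunit (Fintype.card G ^ 2)
      have hpn : p ≡ n [MOD Nat.card G] := (ZMod.natCast_eq_natCast_iff _ _ _).mp hmod
      have hgp : ∀ a : G, a ^ p = a ^ n := fun a =>
        pow_eq_pow_iff_modEq.mpr (hpn.of_dvd (orderOf_dvd_natCard a))
      have hpcop : p.Coprime (Nat.card G) := by
        have hcard0 : 0 < Fintype.card G := Fintype.card_pos
        rw [Nat.card_eq_fintype_card]
        refine (hp.coprime_iff_not_dvd).mpr fun hd => ?_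
        have h1 : Fintype.card G < p :=
          lt_of_le_of_lt (Nat.le_self_pow two_ne_zero _) hgt
        exact absurd (Nat.le_of_dvd hcard0 hd) (not_le.mpr h1)
      obtain ⟨d, s, hds⟩ := key p hp hgt h₀ t ⁅h₀, t⁆ rfl
      have hγ : IsGammaVal k (h₀ ^ p) := ih hkpos p hpcop h₀ hh
      have hres : IsGammaVal (k + 1) (⁅h₀, t⁆ ^ p) :=
        (isGammaVal_succ_iff hkpos _).mpr ⟨d * h₀ ^ p * d⁻¹, s, IsGammaVal.conj hγ d, hds⟩
      rwa [hgp] at hres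

end Gamma

end GammaAux

theorem stmt8 {G : Type*} [Group G] [Finite G] (k n : ℕ) (hk : 0 < k) (hn : 0 < n)
    (hcop : n.Coprime (Nat.card G)) :
    {x : G | IsGammaVal k x} = {x : G | ∃ g : G, IsGammaVal k g ∧ x = g ^ n} := by
  ext x
  simp only [Set.mem_setOf_eq]
  constructor
  · intro hx
    have hpos : 0 < Nat.card G := Nat.card_pos
    have htot : 0 < (Nat.card G).totient := Nat.totient_pos.mpr hpos
    set m := n ^ ((Nat.card G).totient - 1) with hm
    have hmcop : m.Coprime (Nat.card G) := Nat.Coprime.pow_left _ hcop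
    refine ⟨x ^ m, GammaAux.pow_gamma k hk m hmcop x hx, ?_⟩
    rw [← pow_mul]
    have hexp : m * n = n ^ (Nat.card G).totient := by
      have hps : (Nat.card G).totient - 1 + 1 = (Nat.card G).totient := by omega
      rw [hm, ← pow_succ, hps]
    rw [hexp]
    have h2 : x ^ (n ^ (Nat.card G).totient) = x ^ 1 :=
      pow_eq_pow_iff_modEq.mpr ((Nat.ModEq.pow_totient hcop).of_dvd (orderOf_dvd_natCard x))
    rw [h2, pow_one]
  · rintro ⟨g, hg, rfl⟩
    exact GammaAux.pow_gamma k hk n hcop g hg
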